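/- Let r ≤ min{n₁, n₂}, let Ω ⊆ {1, …, n₁} × {1, …, n₂}, and let ℒ = {X ∈ ℝ^{n₁×n₂} : X_{ij} = 0 for all (i, j) ∈ Ω}. Suppose there exist matrices V* ∈ ℝ^{n₁×r} and W* ∈ ℝ^{n₂×r} of full column rank r such that the tangent space T = {HW*ᵀ + V*Kᵀ : H ∈ ℝ^{n₁×r}, K ∈ ℝ^{n₂×r}} satisfies T ∩ ℒ = {0}. Then the characteristic rank 𝔯 of the map G(V, W, Z) = VWᵀ + Z (over full-column-rank pairs (V, W) and Z ∈ ℒ) equals r(n₁ + n₂ − r) + n₁n₂ − |Ω|, i.e., equality holds in the bound 𝔯 ≤ r(n₁ + n₂ − r) + n₁n₂ − |Ω|. -/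

import Mathlib

/-- The differential of the matrix factorization map `𝒢(V, W) = V Wᵀ` at `(V, W)`:
the linear map `(H, K) ↦ H Wᵀ + V Kᵀ`. -/
noncomputable def factorizationDiff {n₁ n₂ r : ℕ}
    (V : Matrix (Fin n₁) (Fin r) ℝ) (W : Matrix (Fin n₂) (Fin r) ℝ) :
    (Matrix (Fin n₁) (Fin r) ℝ × Matrix (Fin n₂) (Fin r) ℝ) →ₗ[ℝ]
      Matrix (Fin n₁) (Fin n₂) ℝ where
  toFun p := p.1 * W.transpose + V * p.2.transpose
  map_add' p q := by
    simp [Matrix.transpose_add, Matrix.add_mul, Matrix.mul_add]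
    abel
  map_smul' c p := by
    simp [Matrix.transpose_smul, Matrix.smul_mul, Matrix.mul_smul, smul_add]

/-- The subspace `ℒ = {X : X_{ij} = 0 for (i,j) ∈ Ω}` of matrices vanishing on the
observed index set `Ω`. -/
def obsNullSpace {n₁ n₂ : ℕ} (Ω : Finset (Fin n₁ × Fin n₂)) :
    Submodule ℝ (Matrix (Fin n₁) (Fin n₂) ℝ) where
  carrier := {X | ∀ p ∈ Ω, X p.1 p.2 = 0}
  add_mem' := by
    intro a b ha hb p hp
    simp [Matrix.add_apply, ha p hp, hb p hp]
  zero_mem' := by intro p hp; simp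
  smul_mem' := by
    intro c a ha p hp
    simp [Matrix.smul_apply, ha p hp]

open Module Matrix

-- injectivity of left multiplication by a full column rank matrix
lemma mul_left_cancel_of_rank {n r : ℕ} {V : Matrix (Fin n) (Fin r) ℝ}
    (hV : V.rank = r) {m : Type*} [Fintype m] {M : Matrix (Fin r) m ℝ}
    (h : V * M = 0) : M = 0 := by
  have hker : LinearMap.ker V.mulVecLin = ⊥ := by
    have h1 := LinearMap.finrank_range_add_finrank_ker V.mulVecLin
    rw [show finrank ℝ (LinearMap.range V.mulVecLin) = r from hV] at h1
    simp only [Module.finrank_pi, Fintype.card_fin] at h1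
    have : finrank ℝ (LinearMap.ker V.mulVecLin) = 0 := by omega
    exact Submodule.finrank_eq_zero.mp this
  ext k j
  have hv : V.mulVec (fun i => M i j) = 0 := by
    ext i
    have := congrFun (congrFun h i) j
    simpa [Matrix.mul_apply, Matrix.mulVec, dotProduct] using this
  have : (fun i => M i j) ∈ LinearMap.ker V.mulVecLin := hv
  rw [hker] at this
  simpa using congrFun this k

lemma isUnit_transpose_mul_self {n r : ℕ} {W : Matrix (Fin n) (Fin r) ℝ}
    (hW : W.rank = r) : IsUnit (Wᵀ * W) := by
  have hrk : (Wᵀ * W).rank = r := by rw [Matrix.rank_transpose_mul_self, hW]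
  rw [← Matrix.mulVec_surjective_iff_isUnit]
  have : LinearMap.range (Wᵀ * W).mulVecLin = ⊤ := by
    apply Submodule.eq_top_of_finrank_eq
    simp only [Module.finrank_pi, Fintype.card_fin]
    exact hrk
  intro y
  exact LinearMap.range_eq_top.mp this y

lemma finrank_range_factorizationDiff {n₁ n₂ r : ℕ} (hr : r ≤ n₁ + n₂)
    {V : Matrix (Fin n₁) (Fin r) ℝ} {W : Matrix (Fin n₂) (Fin r) ℝ}
    (hV : V.rank = r) (hW : W.rank = r) :
    finrank ℝ (LinearMap.range (factorizationDiff V W)) = r * (n₁ + n₂ - r) := by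
  set f := factorizationDiff V W
  let g : Matrix (Fin r) (Fin r) ℝ →ₗ[ℝ]
      (Matrix (Fin n₁) (Fin r) ℝ × Matrix (Fin n₂) (Fin r) ℝ) :=
    { toFun := fun A => (V * A, -(W * Aᵀ))
      map_add' := by
        intro A B
        simp [Matrix.mul_add, Matrix.transpose_add, Prod.ext_iff]
        abel
      map_smul' := by
        intro c A
        simp [Matrix.mul_smul, Matrix.transpose_smul, Prod.ext_iff] }
  have hinj : Function.Injective g := by
    intro A B hAB
    have h1 : V * A = V * B := congrArg Prod.fst hAB
    have h2 : V * (A - B) = 0 := by rw [Matrix.mul_sub, h1, sub_self]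
    have := mul_left_cancel_of_rank hV h2
    linear_combination (norm := abel) this
  have hker : LinearMap.ker f = LinearMap.range g := by
    apply le_antisymm
    · rintro ⟨H, K⟩ hHK
      simp only [LinearMap.mem_ker, f, factorizationDiff, LinearMap.coe_mk,
        AddHom.coe_mk] at hHK
      have hu : IsUnit (Wᵀ * W) := isUnit_transpose_mul_self hW
      have hdet : IsUnit (Wᵀ * W).det := (Matrix.isUnit_iff_isUnit_det _).mp hu
      have hinv : (Wᵀ * W) * (Wᵀ * W)⁻¹ = 1 := Matrix.mul_nonsing_inv _ hdet
      set B := (Wᵀ * W)⁻¹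
      set A := -(Kᵀ * W * B) with hA
      have hHW : H * Wᵀ = -(V * Kᵀ) := by
        have := hHK
        linear_combination (norm := abel) this
      have hH : H = V * A := by
        calc H = H * (1 : Matrix (Fin r) (Fin r) ℝ) := by rw [Matrix.mul_one]
        _ = H * ((Wᵀ * W) * B) := by rw [hinv]
        _ = (H * Wᵀ) * W * B := by simp only [Matrix.mul_assoc]
        _ = -(V * Kᵀ) * W * B := by rw [hHW]
        _ = V * A := by simp [hA, Matrix.mul_assoc]
      have hVK : V * (A * Wᵀ + Kᵀ) = 0 := by
        rw [Matrix.mul_add, ← Matrix.mul_assoc, ← hH, hHK]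
      have hK0 : A * Wᵀ + Kᵀ = 0 := mul_left_cancel_of_rank hV hVK
      have hK : K = -(W * Aᵀ) := by
        have : Kᵀ = -(A * Wᵀ) := by linear_combination (norm := abel) hK0
        calc K = Kᵀᵀ := (Matrix.transpose_transpose K).symm
        _ = (-(A * Wᵀ))ᵀ := by rw [this]
        _ = -(W * Aᵀ) := by simp [Matrix.transpose_mul]
      exact ⟨A, by simp [g, ← hH, ← hK]⟩
    · rintro _ ⟨A, rfl⟩
      simp only [LinearMap.mem_ker, f, factorizationDiff, LinearMap.coe_mk,
        AddHom.coe_mk, g]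
      rw [Matrix.transpose_neg, Matrix.transpose_mul, Matrix.transpose_transpose,
        Matrix.mul_neg, ← Matrix.mul_assoc]
      exact add_neg_cancel _
  have hkerdim : finrank ℝ (LinearMap.ker f) = r * r := by
    rw [hker, LinearMap.finrank_range_of_inj hinj]
    simp [Module.finrank_matrix]
  have hrn := LinearMap.finrank_range_add_finrank_ker f
  have hdom : finrank ℝ (Matrix (Fin n₁) (Fin r) ℝ × Matrix (Fin n₂) (Fin r) ℝ)
      = n₁ * r + n₂ * r := by
    simp [Module.finrank_prod, Module.finrank_matrix]
  rw [hdom, hkerdim] at hrn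
  have harith : r * (n₁ + n₂ - r) + r * r = n₁ * r + n₂ * r := by
    rw [← Nat.mul_add, Nat.sub_add_cancel hr]
    ring
  omega

lemma finrank_obsNullSpace {n₁ n₂ : ℕ} (Ω : Finset (Fin n₁ × Fin n₂)) :
    finrank ℝ (obsNullSpace Ω) = n₁ * n₂ - Ω.card := by
  classical
  let π : Matrix (Fin n₁) (Fin n₂) ℝ →ₗ[ℝ] ({x // x ∈ Ω} → ℝ) :=
    { toFun := fun X p => X p.1.1 p.1.2
      map_add' := fun X Y => rfl
      map_smul' := fun c X => rfl }
  have hker : LinearMap.ker π = obsNullSpace Ω := by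
    ext X
    constructor
    · intro hX p hp
      exact congrFun hX ⟨p, hp⟩
    · intro hX
      funext p
      exact hX p.1 p.2
  have hsurj : Function.Surjective π := by
    intro f
    refine ⟨fun i j => if h : (i, j) ∈ Ω then f ⟨(i, j), h⟩ else 0, ?_⟩
    funext p
    simp only [π, LinearMap.coe_mk, AddHom.coe_mk]
    show (if h : (p.1.1, p.1.2) ∈ Ω then f ⟨(p.1.1, p.1.2), h⟩ else 0) = f p
    rw [dif_pos (by simp)]
  have hrn := LinearMap.finrank_range_add_finrank_ker π
  rw [LinearMap.range_eq_top.mpr hsurj, hker] at hrn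
  have h1 : finrank ℝ (⊤ : Submodule ℝ ({x // x ∈ Ω} → ℝ)) = Ω.card := by
    rw [finrank_top]
    simp
  have h2 : finrank ℝ (Matrix (Fin n₁) (Fin n₂) ℝ) = n₁ * n₂ := by
    simp [Module.finrank_matrix]
  rw [h1, h2] at hrn
  omega


/-- For noisy matrix completion with observation set `Ω`, if there is a
full-column-rank pair `(V*, W*)` whose tangent space `T = {H W*ᵀ + V* Kᵀ}` satisfies
`T ∩ ℒ = {0}`, then the characteristic rank of `G(V, W, Z) = V Wᵀ + Z` (maximum over
full-column-rank pairs `(V, W)` of the dimension of `T(V,W) + ℒ`) equals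
`r(n₁ + n₂ − r) + n₁n₂ − |Ω|`. -/
theorem characteristicRank_matrixCompletion {n₁ n₂ r : ℕ} (hr₁ : r ≤ n₁) (hr₂ : r ≤ n₂)
    (Ω : Finset (Fin n₁ × Fin n₂))
    (hwp : ∃ (Vstar : Matrix (Fin n₁) (Fin r) ℝ) (Wstar : Matrix (Fin n₂) (Fin r) ℝ),
      Vstar.rank = r ∧ Wstar.rank = r ∧
      LinearMap.range (factorizationDiff Vstar Wstar) ⊓ obsNullSpace Ω = ⊥) :
    IsGreatest
      {t : ℕ | ∃ (V : Matrix (Fin n₁) (Fin r) ℝ) (W : Matrix (Fin n₂) (Fin r) ℝ),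
        V.rank = r ∧ W.rank = r ∧
        t = Module.finrank ℝ
          ↥(LinearMap.range (factorizationDiff V W) ⊔ obsNullSpace Ω)}
      (r * (n₁ + n₂ - r) + (n₁ * n₂ - Ω.card)) := by
  have hr : r ≤ n₁ + n₂ := le_trans hr₁ (Nat.le_add_right _ _)
  obtain ⟨Vs, Ws, hVs, hWs, hint⟩ := hwp
  constructor
  · refine ⟨Vs, Ws, hVs, hWs, ?_⟩
    have := Submodule.finrank_sup_add_finrank_inf_eq
      (LinearMap.range (factorizationDiff Vs Ws)) (obsNullSpace Ω)
    rw [hint, finrank_bot, Nat.add_zero,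
      finrank_range_factorizationDiff hr hVs hWs, finrank_obsNullSpace] at this
    omega
  · rintro t ⟨V, W, hV, hW, rfl⟩
    calc finrank ℝ ↥(LinearMap.range (factorizationDiff V W) ⊔ obsNullSpace Ω)
        ≤ finrank ℝ ↥(LinearMap.range (factorizationDiff V W))
          + finrank ℝ ↥(obsNullSpace Ω) :=
          Submodule.finrank_add_le_finrank_add_finrank _ _
      _ = r * (n₁ + n₂ - r) + (n₁ * n₂ - Ω.card) := by
          rw [finrank_range_factorizationDiff hr hV hW, finrank_obsNullSpace]
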